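/- For every integer n ≥ 1 and every finite subset A of Ω: W_A is a Sym(Ω∖A)-invariant subspace of Im β*_{n,n-1}, closed in the product topology and of finite index in Im β*_{n,n-1}; moreover every F_2-subspace W of Im β*_{n,n-1} that is Sym(Ω∖A)-invariant, closed in the product topology, and of finite index in Im β*_{n,n-1} contains W_A. Hence W_A is the unique minimal closed Sym(Ω∖A)-submodule of Im β*_{n,n-1} of finite index. -/

import Mathlib

/-- The set of `m`-element subsets of `Ω`. -/
abbrev NSubsets (Ω : Type*) (m : ℕ) := {s : Finset Ω // s.card = m}

/-- The dual map `β*_{m,j} : F₂^{[Ω]^j} → F₂^{[Ω]^m}`,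
`(β*_{m,j} f)(ω) = Σ_{x ∈ [ω]^j} f(x)`. -/
noncomputable def betaStar (Ω : Type*) (m j : ℕ) :
    (NSubsets Ω j → ZMod 2) →ₗ[ZMod 2] (NSubsets Ω m → ZMod 2) where
  toFun f := fun ω => ∑ x ∈ (Finset.powersetCard j ω.1).attach,
      f ⟨x.1, (Finset.mem_powersetCard.mp x.2).2⟩
  map_add' f g := by
    funext ω
    simp [Finset.sum_add_distrib]
  map_smul' c f := by
    funext ω
    simp [Finset.mul_sum, smul_eq_mul]

/-- The map `β_{m,j} : F₂[Ω]^m → F₂[Ω]^j` on the free modules, sending a basis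
element `ω ∈ [Ω]^m` to `Σ_{ω' ∈ [ω]^j} ω'`. -/
noncomputable def beta (Ω : Type*) (m j : ℕ) :
    (NSubsets Ω m →₀ ZMod 2) →ₗ[ZMod 2] (NSubsets Ω j →₀ ZMod 2) :=
  Finsupp.lsum (ZMod 2) fun ω =>
    ∑ x ∈ (Finset.powersetCard j ω.1).attach,
      Finsupp.lsingle ⟨x.1, (Finset.mem_powersetCard.mp x.2).2⟩

/-- The natural action of a permutation of `Ω` on `m`-element subsets of `Ω`. -/
def permImage {Ω : Type*} [DecidableEq Ω] (σ : Equiv.Perm Ω) {n : ℕ}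
    (w : NSubsets Ω n) : NSubsets Ω n :=
  ⟨w.1.image σ, by rw [Finset.card_image_of_injective _ σ.injective, w.2]⟩

/-- `V_{B,A}`: functions on `[Ω]^{n-1}` vanishing at every `w` with `w ∩ A ≠ B`. -/
def VBA (Ω : Type*) [DecidableEq Ω] (n : ℕ) (A B : Finset Ω) :
    Submodule (ZMod 2) (NSubsets Ω (n - 1) → ZMod 2) where
  carrier := {f | ∀ w : NSubsets Ω (n - 1), w.1 ∩ A ≠ B → f w = 0}
  add_mem' := by
    intro f g hf hg w hw
    simp only [Pi.add_apply, hf w hw, hg w hw, add_zero]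
  zero_mem' := fun w _ => rfl
  smul_mem' := by
    intro c f hf w hw
    simp only [Pi.smul_apply, hf w hw, smul_zero]

/-- `V_A`: the sum of the subspaces `V_{B,A}` over `B ⊆ A` with `|B| < n - 1`. -/
def VA (Ω : Type*) [DecidableEq Ω] (n : ℕ) (A : Finset Ω) :
    Submodule (ZMod 2) (NSubsets Ω (n - 1) → ZMod 2) :=
  ⨆ B ∈ {B : Finset Ω | B ⊆ A ∧ B.card < n - 1}, VBA Ω n A B

/-- `W_A = β*_{n,n-1}(V_A)`. -/
noncomputable def WA (Ω : Type*) [DecidableEq Ω] (n : ℕ) (A : Finset Ω) :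
    Submodule (ZMod 2) (NSubsets Ω n → ZMod 2) :=
  (VA Ω n A).map (betaStar Ω n (n - 1))

instance : TopologicalSpace (ZMod 2) := ⊥
instance : DiscreteTopology (ZMod 2) := ⟨rfl⟩

-- ==================== auxiliary material ====================

instance : ContinuousAdd (ZMod 2) := ⟨continuous_of_discreteTopology⟩
instance : ContinuousNeg (ZMod 2) := ⟨continuous_of_discreteTopology⟩
instance : IsTopologicalAddGroup (ZMod 2) := {}

lemma betaStar_apply {Ω : Type*} (m j : ℕ) (f : NSubsets Ω j → ZMod 2) (ω : NSubsets Ω m) :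
    betaStar Ω m j f ω = ∑ x ∈ (Finset.powersetCard j ω.1).attach,
      f ⟨x.1, (Finset.mem_powersetCard.mp x.2).2⟩ := rfl

/-- `V'_A`: functions vanishing on all `(n-1)`-subsets of `A`. -/
def Vprime (Ω : Type*) [DecidableEq Ω] (n : ℕ) (A : Finset Ω) :
    Submodule (ZMod 2) (NSubsets Ω (n - 1) → ZMod 2) where
  carrier := {f | ∀ w : NSubsets Ω (n - 1), w.1 ⊆ A → f w = 0}
  add_mem' := by
    intro f g hf hg w hw
    simp only [Pi.add_apply, hf w hw, hg w hw, add_zero]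
  zero_mem' := fun w _ => rfl
  smul_mem' := by
    intro c f hf w hw
    simp only [Pi.smul_apply, hf w hw, smul_zero]

lemma mem_Vprime {Ω : Type*} [DecidableEq Ω] {n : ℕ} {A : Finset Ω}
    {f : NSubsets Ω (n - 1) → ZMod 2} :
    f ∈ Vprime Ω n A ↔ ∀ w : NSubsets Ω (n - 1), w.1 ⊆ A → f w = 0 := Iff.rfl

lemma VA_eq (Ω : Type*) [DecidableEq Ω] (n : ℕ) (A : Finset Ω) :
    VA Ω n A = Vprime Ω n A := by
  classical
  apply le_antisymm
  · rw [VA]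
    apply iSup₂_le
    intro B hB f hf w hw
    apply hf w
    rw [Finset.inter_eq_left.mpr hw]
    intro h
    have h2 := w.2
    rw [h] at h2
    have := hB.2
    omega
  · intro f hf
    have key : f = ∑ B ∈ A.powerset.filter (fun B => B.card < n - 1),
        (fun w : NSubsets Ω (n-1) => if w.1 ∩ A = B then f w else 0) := by
      funext w
      rw [Finset.sum_apply]
      rw [Finset.sum_ite_eq]
      split_ifs with hmem
      · rfl
      · -- `w.1 ∩ A` not in the filter, so `|w ∩ A| = n - 1`, so `w ⊆ A`
        have hsub : w.1 ∩ A ⊆ A := Finset.inter_subset_right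
        have hc : ¬ (w.1 ∩ A).card < n - 1 := by
          intro hc
          exact hmem (Finset.mem_filter.mpr ⟨Finset.mem_powerset.mpr hsub, hc⟩)
        have hle : (w.1 ∩ A).card ≤ n - 1 := by
          calc (w.1 ∩ A).card ≤ w.1.card := Finset.card_le_card Finset.inter_subset_left
          _ = n - 1 := w.2
        have heq : w.1 ∩ A = w.1 := by
          apply Finset.eq_of_subset_of_card_le Finset.inter_subset_left
          rw [w.2]; omega
        exact hf w (by rw [← heq]; exact Finset.inter_subset_right)
    rw [key]
    apply Submodule.sum_mem
    intro B hB
    rcases Finset.mem_filter.mp hB with ⟨hBA, hcard⟩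
    have hle : VBA Ω n A B ≤ VA Ω n A := by
      rw [VA]
      exact le_iSup₂ (f := fun (B : Finset Ω)
        (_ : B ∈ {B : Finset Ω | B ⊆ A ∧ B.card < n - 1}) => VBA Ω n A B) B
        ⟨Finset.mem_powerset.mp hBA, hcard⟩
    apply hle
    intro w hw
    exact if_neg hw

lemma betaStar_continuous (Ω : Type*) (m j : ℕ) : Continuous (betaStar Ω m j) := by
  apply continuous_pi
  intro ω
  simp only [betaStar_apply]
  exact continuous_finset_sum _ fun x _ => continuous_apply _

lemma Vprime_isClosed (Ω : Type*) [DecidableEq Ω] (n : ℕ) (A : Finset Ω) :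
    IsClosed ((Vprime Ω n A : Set (NSubsets Ω (n-1) → ZMod 2))) := by
  have h : (Vprime Ω n A : Set (NSubsets Ω (n-1) → ZMod 2)) =
      ⋂ (w : NSubsets Ω (n-1)) (_ : w.1 ⊆ A), {f : NSubsets Ω (n-1) → ZMod 2 | f w = 0} := by
    ext f
    simp only [SetLike.mem_coe, mem_Vprime, Set.mem_iInter, Set.mem_setOf_eq]
  rw [h]
  exact isClosed_iInter fun w => isClosed_iInter fun _ =>
    isClosed_eq (continuous_apply w) continuous_const

lemma WA_isClosed (Ω : Type*) [DecidableEq Ω] (n : ℕ) (A : Finset Ω) :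
    IsClosed (WA Ω n A : Set (NSubsets Ω n → ZMod 2)) := by
  have h : (WA Ω n A : Set (NSubsets Ω n → ZMod 2)) =
      betaStar Ω n (n-1) '' (Vprime Ω n A : Set (NSubsets Ω (n-1) → ZMod 2)) := by
    rw [WA, VA_eq]
    rfl
  rw [h]
  exact (((Vprime_isClosed Ω n A).isCompact).image (betaStar_continuous Ω n (n-1))).isClosed

lemma permImage_fix {Ω : Type*} [DecidableEq Ω] (σ : Equiv.Perm Ω) {m : ℕ} (w : NSubsets Ω m)
    (h : ∀ a ∈ w.1, σ a = a) : permImage σ w = w := by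
  apply Subtype.ext
  show w.1.image σ = w.1
  rw [Finset.image_congr (g := id) (fun a ha => h a ha), Finset.image_id]

lemma betaStar_perm {Ω : Type*} [DecidableEq Ω] (n : ℕ) (σ : Equiv.Perm Ω)
    (g : NSubsets Ω (n-1) → ZMod 2) (ω : NSubsets Ω n) :
    betaStar Ω n (n-1) (fun w => g (permImage σ w)) ω
      = betaStar Ω n (n-1) g (permImage σ ω) := by
  rw [betaStar_apply, betaStar_apply]
  have hmem : ∀ x ∈ Finset.powersetCard (n-1) ω.1,
      x.image σ ∈ Finset.powersetCard (n-1) (permImage σ ω).1 := by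
    intro x hx
    rcases Finset.mem_powersetCard.mp hx with ⟨hsub, hcard⟩
    exact Finset.mem_powersetCard.mpr ⟨Finset.image_subset_image hsub,
      by rw [Finset.card_image_of_injective _ σ.injective]; exact hcard⟩
  have hmem' : ∀ y ∈ Finset.powersetCard (n-1) (permImage σ ω).1,
      y.image σ.symm ∈ Finset.powersetCard (n-1) ω.1 := by
    intro y hy
    rcases Finset.mem_powersetCard.mp hy with ⟨hsub, hcard⟩
    refine Finset.mem_powersetCard.mpr ⟨?_, by
      rw [Finset.card_image_of_injective _ σ.symm.injective]; exact hcard⟩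
    intro a ha
    rcases Finset.mem_image.mp ha with ⟨b, hb, rfl⟩
    have hb' := hsub hb
    rcases Finset.mem_image.mp hb' with ⟨c, hc, rfl⟩
    simpa using hc
  refine Finset.sum_nbij'
    (i := fun x => ⟨x.1.image σ, hmem x.1 x.2⟩)
    (j := fun y => ⟨y.1.image σ.symm, hmem' y.1 y.2⟩) ?_ ?_ ?_ ?_ ?_
  · intro a _; exact Finset.mem_attach _ _
  · intro a _; exact Finset.mem_attach _ _
  · intro a _
    apply Subtype.ext
    show (a.1.image σ).image σ.symm = a.1
    rw [Finset.image_image]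
    simp
  · intro a _
    apply Subtype.ext
    show (a.1.image σ.symm).image σ = a.1
    rw [Finset.image_image]
    simp
  · intro a _
    rfl

lemma betaStar_single {Ω : Type*} [DecidableEq Ω] (n : ℕ) (w : NSubsets Ω (n-1))
    (ω : NSubsets Ω n) :
    betaStar Ω n (n-1) (Pi.single w 1) ω = if w.1 ⊆ ω.1 then 1 else 0 := by
  classical
  rw [betaStar_apply]
  have h1 : ∀ x : {x // x ∈ Finset.powersetCard (n-1) ω.1},
      (Pi.single w (1:ZMod 2) : NSubsets Ω (n-1) → ZMod 2) ⟨x.1, (Finset.mem_powersetCard.mp x.2).2⟩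
        = (fun u => if u = w.1 then (1:ZMod 2) else 0) x.1 := by
    intro x
    simp only [Pi.single_apply]
    congr 1
    simp [Subtype.ext_iff]
  rw [Finset.sum_congr rfl (fun x _ => h1 x)]
  rw [Finset.sum_attach _ (fun u => if u = w.1 then (1:ZMod 2) else 0)]
  rw [Finset.sum_ite_eq']
  by_cases h : w.1 ⊆ ω.1 <;> simp [Finset.mem_powersetCard, h, w.2]

lemma exists_finset_zero_imp_mem (Ω : Type*) [DecidableEq Ω] (n : ℕ)
    (W : Submodule (ZMod 2) (NSubsets Ω n → ZMod 2))
    (hWc : IsClosed (W : Set (NSubsets Ω n → ZMod 2)))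
    (hWf : Finite ((LinearMap.range (betaStar Ω n (n - 1))) ⧸
      W.comap (LinearMap.range (betaStar Ω n (n - 1))).subtype)) :
    ∃ S : Finset (NSubsets Ω n), ∀ f ∈ LinearMap.range (betaStar Ω n (n-1)),
      (∀ s ∈ S, f s = 0) → f ∈ W := by
  classical
  set R := LinearMap.range (betaStar Ω n (n-1)) with hR
  set Wc := W.comap R.subtype with hWcDef
  have hclosed : IsClosed ((Wc.toAddSubgroup : Set R)) := by
    have h : (Wc.toAddSubgroup : Set R) = (Subtype.val : R → _) ⁻¹' (W : Set _) := rfl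
    rw [h]
    exact hWc.preimage continuous_subtype_val
  haveI hfin : Finite (R ⧸ Wc.toAddSubgroup) := hWf
  haveI : Wc.toAddSubgroup.FiniteIndex := AddSubgroup.finiteIndex_of_finite_quotient
  have hopen : IsOpen ((Wc.toAddSubgroup : Set R)) :=
    AddSubgroup.isOpen_of_isClosed_of_finiteIndex _ hclosed
  have h0 : (Wc.toAddSubgroup : Set R) ∈ nhds (0 : R) := hopen.mem_nhds (zero_mem _)
  rw [mem_nhds_subtype] at h0
  obtain ⟨U, hU, hUsub⟩ := h0
  rw [nhds_pi] at hU
  obtain ⟨I, hIfin, t, ht, htsub⟩ := Filter.mem_pi.mp hU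
  refine ⟨hIfin.toFinset, ?_⟩
  intro f hf hfz
  have hfU : f ∈ U := by
    apply htsub
    intro i hi
    have h0t : (0 : ZMod 2) ∈ t i := by
      have := ht i
      rw [nhds_discrete] at this
      simpa using this
    have : f i = 0 := hfz i (hIfin.mem_toFinset.mpr hi)
    rw [this]
    exact h0t
  have : (⟨f, hf⟩ : R) ∈ Wc.toAddSubgroup := hUsub hfU
  exact this

lemma single_mem_of_invariant (Ω : Type*) [DecidableEq Ω] [Infinite Ω] (n : ℕ)
    (A : Finset Ω)
    (W : Submodule (ZMod 2) (NSubsets Ω n → ZMod 2))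
    (hinv : ∀ σ : Equiv.Perm Ω, (∀ a ∈ A, σ a = a) →
      ∀ f ∈ W, (fun w => f (permImage σ⁻¹ w)) ∈ W)
    (S : Finset (NSubsets Ω n))
    (hS : ∀ f ∈ LinearMap.range (betaStar Ω n (n-1)), (∀ s ∈ S, f s = 0) → f ∈ W)
    (w : NSubsets Ω (n-1)) (hw : ¬ w.1 ⊆ A) :
    betaStar Ω n (n-1) (Pi.single w 1) ∈ W := by
  classical
  set Big : Finset Ω := A ∪ w.1 ∪ S.biUnion (fun ω => ω.1) with hBig
  set E : Finset Ω := w.1 \ A with hE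
  have hEne : E.Nonempty := Finset.sdiff_nonempty.mpr hw
  have hinf : (↑Big : Set Ω)ᶜ.Infinite := Big.finite_toSet.infinite_compl
  obtain ⟨tset, htsub, htfin, htcard⟩ := hinf.exists_subset_ncard_eq E.card
  set F : Finset Ω := htfin.toFinset with hF
  have hFsub : ↑F ⊆ (↑Big : Set Ω)ᶜ := by
    rw [hF, Set.Finite.coe_toFinset]
    exact htsub
  have hFcard : F.card = E.card := by
    rw [hF, ← htcard, Set.ncard_eq_toFinset_card tset htfin]
  have hFBig : ∀ x ∈ F, x ∉ Big := by
    intro x hx hxBig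
    exact (hFsub hx) hxBig
  have hwBig : w.1 ⊆ Big := fun x hx =>
    Finset.mem_union_left _ (Finset.mem_union_right _ hx)
  have hABig : A ⊆ Big := fun x hx =>
    Finset.mem_union_left _ (Finset.mem_union_left _ hx)
  have hSBig : ∀ ω ∈ S, ω.1 ⊆ Big := fun ω hω x hx =>
    Finset.mem_union_right _ (Finset.mem_biUnion.mpr ⟨ω, hω, hx⟩)
  have hDE : Disjoint F E := by
    rw [Finset.disjoint_left]
    intro x hxF hxE
    exact hFBig x hxF (hwBig (Finset.mem_sdiff.mp hxE).1)
  let t : {x // x ∈ F} ≃ {x // x ∈ E} := Finset.equivOfCardEq hFcard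
  let π : Ω → Ω := fun x =>
    if hx : x ∈ F then (t ⟨x, hx⟩ : Ω)
    else if hx' : x ∈ E then ((t.symm ⟨x, hx'⟩ : Ω)) else x
  have hπF : ∀ (x) (hx : x ∈ F), π x = (t ⟨x, hx⟩ : Ω) := by
    intro x hx; simp only [π, dif_pos hx]
  have hπE : ∀ (x) (hx : x ∈ E), π x = (t.symm ⟨x, hx⟩ : Ω) := by
    intro x hx
    have hxF : x ∉ F := Finset.disjoint_right.mp hDE hx
    simp only [π, dif_neg hxF, dif_pos hx]
  have hπo : ∀ x, x ∉ F → x ∉ E → π x = x := by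
    intro x h1 h2; simp only [π, dif_neg h1, dif_neg h2]
  have hπinv : Function.Involutive π := by
    intro x
    by_cases hx : x ∈ F
    · rw [hπF x hx]
      have h1 : (t ⟨x, hx⟩ : Ω) ∈ E := (t ⟨x, hx⟩).2
      rw [hπE _ h1]
      simp
    · by_cases hx' : x ∈ E
      · rw [hπE x hx']
        have h1 : (t.symm ⟨x, hx'⟩ : Ω) ∈ F := (t.symm ⟨x, hx'⟩).2
        rw [hπF _ h1]
        simp
      · rw [hπo x hx hx', hπo x hx hx']
  let σ : Equiv.Perm Ω := hπinv.toPerm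
  have hσ : ∀ x, σ x = π x := fun _ => rfl
  have hσinv : σ⁻¹ = σ := by
    apply Equiv.ext
    intro x
    show σ.symm x = σ x
    apply σ.injective
    rw [Equiv.apply_symm_apply, hσ, hσ, hπinv x]
  have hσA : ∀ a ∈ A, σ a = a := by
    intro a ha
    rw [hσ]
    apply hπo
    · exact fun h => hFBig a h (hABig ha)
    · exact fun h => (Finset.mem_sdiff.mp h).2 ha
  -- the moved set w''
  have hIA : Disjoint (w.1 ∩ A) F := by
    rw [Finset.disjoint_right]
    intro x hxF hxI
    exact hFBig x hxF (hABig (Finset.mem_inter.mp hxI).2)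
  have hcard'' : ((w.1 ∩ A) ∪ F).card = n - 1 := by
    rw [Finset.card_union_of_disjoint hIA, hFcard, hE,
      Finset.card_inter_add_card_sdiff w.1 A]
    exact w.2
  set w'' : NSubsets Ω (n-1) := ⟨(w.1 ∩ A) ∪ F, hcard''⟩ with hw''
  -- β*(δ_{w''}) vanishes on S
  obtain ⟨p, hp⟩ : F.Nonempty := by
    rw [← Finset.card_pos, hFcard, Finset.card_pos]
    exact hEne
  have hvan : ∀ s ∈ S, betaStar Ω n (n-1) (Pi.single w'' 1) s = 0 := by
    intro s hsS
    rw [betaStar_single]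
    rw [if_neg]
    intro hsub
    have hpω : p ∈ s.1 := hsub (Finset.mem_union_right _ hp)
    exact hFBig p hp (hSBig s hsS hpω)
  have he'' : betaStar Ω n (n-1) (Pi.single w'' 1) ∈ W :=
    hS _ ⟨Pi.single w'' 1, rfl⟩ hvan
  have happ := hinv σ hσA _ he''
  -- identify the translated function with β*(δ_w)
  have himgF : F.image σ = E := by
    apply Finset.eq_of_subset_of_card_le
    · intro y hy
      rcases Finset.mem_image.mp hy with ⟨x, hx, rfl⟩
      rw [hσ, hπF x hx]
      exact (t ⟨x, hx⟩).2
    · rw [Finset.card_image_of_injective _ σ.injective, hFcard]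
  have himgI : (w.1 ∩ A).image σ = w.1 ∩ A := by
    rw [Finset.image_congr (g := id), Finset.image_id]
    intro a ha
    exact hσA a (Finset.mem_inter.mp ha).2
  have himg : w''.1.image σ = w.1 := by
    show ((w.1 ∩ A) ∪ F).image σ = w.1
    rw [Finset.image_union, himgI, himgF, hE, Finset.union_comm,
      Finset.sdiff_union_inter]
  have hkey : (fun ω => betaStar Ω n (n-1) (Pi.single w'' 1) (permImage σ⁻¹ ω))
      = betaStar Ω n (n-1) (Pi.single w 1) := by
    funext ω
    rw [betaStar_single, betaStar_single, hσinv]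
    have hωi : (ω.1.image σ).image σ = ω.1 := by
      rw [Finset.image_image]
      rw [show (⇑σ ∘ ⇑σ) = id from funext fun x => hπinv x, Finset.image_id]
    have hiff : w''.1 ⊆ (permImage σ ω).1 ↔ w.1 ⊆ ω.1 := by
      show w''.1 ⊆ ω.1.image σ ↔ w.1 ⊆ ω.1
      constructor
      · intro h
        have h2 := Finset.image_subset_image (f := ⇑σ) h
        rw [himg, hωi] at h2
        exact h2
      · intro h
        have hww : w''.1 = (w.1).image σ := by
          have h3 := congrArg (Finset.image ⇑σ) himg
          rw [Finset.image_image,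
            show (⇑σ ∘ ⇑σ) = id from funext fun x => hπinv x, Finset.image_id] at h3
          exact h3
        rw [hww]
        exact Finset.image_subset_image h

    split_ifs with h1 h2 h2
    · rfl
    · exact absurd (hiff.mp h1) h2
    · exact absurd (hiff.mpr h2) h1
    · rfl
  rw [hkey] at happ
  exact happ

/-- `W_A` is a `Sym(Ω∖A)`-invariant, topologically closed subspace of `Im β*_{n,n-1}`
of finite index, and it is contained in every such subspace; hence it is the unique
minimal closed `Sym(Ω∖A)`-submodule of `Im β*_{n,n-1}` of finite index. -/
theorem WA_unique_minimal
    (Ω : Type) [Countable Ω] [Infinite Ω] [DecidableEq Ω] (n : ℕ) (hn : 1 ≤ n)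
    (A : Finset Ω) :
    WA Ω n A ≤ LinearMap.range (betaStar Ω n (n - 1)) ∧
    (∀ σ : Equiv.Perm Ω, (∀ a ∈ A, σ a = a) →
      ∀ f ∈ WA Ω n A, (fun w => f (permImage σ⁻¹ w)) ∈ WA Ω n A) ∧
    IsClosed (WA Ω n A : Set (NSubsets Ω n → ZMod 2)) ∧
    Finite ((LinearMap.range (betaStar Ω n (n - 1))) ⧸
      (WA Ω n A).comap (LinearMap.range (betaStar Ω n (n - 1))).subtype) ∧
    (∀ W : Submodule (ZMod 2) (NSubsets Ω n → ZMod 2),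
      W ≤ LinearMap.range (betaStar Ω n (n - 1)) →
      (∀ σ : Equiv.Perm Ω, (∀ a ∈ A, σ a = a) →
        ∀ f ∈ W, (fun w => f (permImage σ⁻¹ w)) ∈ W) →
      IsClosed (W : Set (NSubsets Ω n → ZMod 2)) →
      Finite ((LinearMap.range (betaStar Ω n (n - 1))) ⧸
        W.comap (LinearMap.range (betaStar Ω n (n - 1))).subtype) →
      WA Ω n A ≤ W) := by
  classical
  refine ⟨?_, ?_, WA_isClosed Ω n A, ?_, ?_⟩
  · -- contained in the range
    exact LinearMap.map_le_range
  · -- invariance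
    rintro σ hσ f hf
    rw [WA] at hf ⊢
    rcases Submodule.mem_map.mp hf with ⟨g, hg, rfl⟩
    refine Submodule.mem_map.mpr ⟨fun w => g (permImage σ⁻¹ w), ?_, ?_⟩
    · rw [VA_eq] at hg ⊢
      intro w hwA
      have hfix : permImage σ⁻¹ w = w := by
        apply permImage_fix
        intro a ha
        have h1 : σ a = a := hσ a (hwA ha)
        exact Equiv.Perm.inv_eq_iff_eq.mpr h1.symm
      show g (permImage σ⁻¹ w) = 0
      rw [hfix]
      exact hg w hwA
    · funext ω
      exact betaStar_perm n σ⁻¹ g ω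
  · -- finite index
    set R := LinearMap.range (betaStar Ω n (n-1)) with hR
    let K := {v : NSubsets Ω (n-1) // v.1 ⊆ A}
    haveI : Finite K := by
      apply Finite.of_injective
        (fun k : K => (⟨k.1.1, Finset.mem_powerset.mpr k.2⟩ : ↥A.powerset))
      intro a b hab
      simp only [Subtype.mk.injEq] at hab
      exact Subtype.ext (Subtype.ext hab)
    haveI : Finite (K → ZMod 2) := by infer_instance
    let ext : (K → ZMod 2) → (NSubsets Ω (n-1) → ZMod 2) :=
      fun h v => if hv : v.1 ⊆ A then h ⟨v, hv⟩ else 0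
    have hsurj : Function.Surjective (fun h : K → ZMod 2 =>
        (Submodule.Quotient.mk (⟨betaStar Ω n (n-1) (ext h), ⟨ext h, rfl⟩⟩ : R)
          : R ⧸ (WA Ω n A).comap R.subtype)) := by
      intro q
      obtain ⟨x, rfl⟩ := Submodule.Quotient.mk_surjective _ q
      obtain ⟨g, hgx⟩ := LinearMap.mem_range.mp x.2
      refine ⟨fun k => g k.1, ?_⟩
      rw [Submodule.Quotient.eq]
      rw [Submodule.mem_comap]
      have hval : (((⟨betaStar Ω n (n-1) (ext fun k => g k.1),
          ⟨ext fun k => g k.1, rfl⟩⟩ : R) - x : R) : NSubsets Ω n → ZMod 2)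
          = betaStar Ω n (n-1) ((ext fun k => g k.1) - g) := by
        rw [map_sub]
        simp [hgx]
      rw [show R.subtype (((⟨betaStar Ω n (n-1) (ext fun k => g k.1),
          ⟨ext fun k => g k.1, rfl⟩⟩ : R) - x : R)) =
          betaStar Ω n (n-1) ((ext fun k => g k.1) - g) from hval]
      rw [WA]
      refine Submodule.mem_map.mpr ⟨_, ?_, rfl⟩
      rw [VA_eq]
      intro v hvA
      have hx : ext (fun k => g k.1) v = g v := by simp [ext, hvA]
      simp [Pi.sub_apply, hx]
    exact Finite.of_surjective _ hsurj
  · -- minimality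
    intro W hle hinv hclosed hfin
    obtain ⟨S, hS⟩ := exists_finset_zero_imp_mem Ω n W hclosed hfin
    rintro f hf
    rcases Submodule.mem_map.mp hf with ⟨g, hg, rfl⟩
    rw [VA_eq] at hg
    set T : Finset (NSubsets Ω (n-1)) := S.biUnion (fun ω =>
      (Finset.powersetCard (n-1) ω.1).attach.image
        (fun x => ⟨x.1, (Finset.mem_powersetCard.mp x.2).2⟩)) with hT
    set g₀ : NSubsets Ω (n-1) → ZMod 2 := fun v => if v ∈ T then g v else 0 with hg₀
    have hsum : g₀ = ∑ v ∈ T, g v • Pi.single v (1 : ZMod 2) := by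
      funext u
      rw [Finset.sum_apply]
      simp only [Pi.smul_apply, Pi.single_apply, smul_eq_mul, mul_ite, mul_one, mul_zero]
      rw [Finset.sum_ite_eq T u g]
    have hf0 : betaStar Ω n (n-1) g₀ ∈ W := by
      rw [hsum, map_sum]
      apply Submodule.sum_mem
      intro v hv
      rw [map_smul]
      by_cases hgv : g v = 0
      · rw [hgv, zero_smul]
        exact W.zero_mem
      · refine Submodule.smul_mem _ _ ?_
        apply single_mem_of_invariant Ω n A W hinv S hS v
        intro hvA
        exact hgv (hg v hvA)
    have hrem : betaStar Ω n (n-1) g - betaStar Ω n (n-1) g₀ ∈ W := by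
      rw [← map_sub]
      apply hS _ ⟨_, rfl⟩
      intro s hsS
      rw [betaStar_apply]
      apply Finset.sum_eq_zero
      intro x _
      have hxT : (⟨x.1, (Finset.mem_powersetCard.mp x.2).2⟩ : NSubsets Ω (n-1)) ∈ T := by
        rw [hT]
        exact Finset.mem_biUnion.mpr ⟨s, hsS,
          Finset.mem_image.mpr ⟨x, Finset.mem_attach _ _, rfl⟩⟩
      show (g - g₀) _ = 0
      rw [Pi.sub_apply, hg₀]
      simp [hxT]
    have hadd := W.add_mem hrem hf0
    rw [sub_add_cancel] at hadd
    exact hadd
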